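/- Let H ⊆ Y^X with BL(H) < ∞. Then SG(H) = O(L(H) · log(BL(H))); in particular, finiteness of BL(H) implies finiteness of SG(H). -/

import Mathlib

open scoped Classical

variable {X : Type*} {Y : Type*}

/-- `H` shatters the Bandit Littlestone tree `Tr` (nodes indexed by label prefixes)
to depth `d`: for every label path some hypothesis avoids every label on the path. -/
def BLShattered (H : Set (X → Y)) (d : ℕ) (Tr : List Y → X) : Prop :=
  ∀ y : Fin d → Y, ∃ h ∈ H, ∀ t : Fin d, h (Tr ((List.ofFn y).take t.1)) ≠ y t

/-- `H` shatters some Bandit Littlestone tree of depth `d`. -/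
def BLShatteredDepth (H : Set (X → Y)) (d : ℕ) : Prop :=
  ∃ Tr : List Y → X, BLShattered H d Tr

/-- The Bandit Littlestone dimension of `H`, as an extended natural number. -/
noncomputable def BLdim (H : Set (X → Y)) : ℕ∞ :=
  ⨆ d ∈ {d : ℕ | BLShatteredDepth H d}, (d : ℕ∞)

/-- `H` shatters the (multiclass) Littlestone tree with nodes `Tr` and edge labels `e`
to depth `d`: edge labels at each internal node are distinct, and every binary path is
realized by some hypothesis agreeing with the edge labels. -/
def LShattered (H : Set (X → Y)) (d : ℕ) (Tr : List Bool → X)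
    (e : List Bool → Bool → Y) : Prop :=
  (∀ p : List Bool, p.length < d → e p false ≠ e p true) ∧
  ∀ σ : Fin d → Bool, ∃ h ∈ H, ∀ t : Fin d,
    h (Tr ((List.ofFn σ).take t.1)) = e ((List.ofFn σ).take t.1) (σ t)

/-- `H` shatters some Littlestone tree of depth `d`. -/
def LShatteredDepth (H : Set (X → Y)) (d : ℕ) : Prop :=
  ∃ Tr e, LShattered H d Tr e

/-- The multiclass Littlestone dimension of `H`, as an extended natural number. -/
noncomputable def Ldim (H : Set (X → Y)) : ℕ∞ :=
  ⨆ d ∈ {d : ℕ | LShatteredDepth H d}, (d : ℕ∞)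

/-- The 0-1 loss class of `H`, as a class of `Prop`-valued functions on `X × Y`. -/
def lossClass (H : Set (X → Y)) : Set (X × Y → Prop) :=
  {f | ∃ h ∈ H, f = fun p => h p.1 ≠ p.2}

/-- The Sequential Graph dimension: the Littlestone dimension of the loss class. -/
noncomputable def SGdim (H : Set (X → Y)) : ℕ∞ := Ldim (lossClass H)

/-- The projection `H(x) = {h x : h ∈ H}`. -/
def proj (H : Set (X → Y)) (x : X) : Set Y := {y | ∃ h ∈ H, h x = y}

universe u v
/-- Follow a binary tree, choosing a branch for each incoming label via `br`,
starting from bool-prefix `p`. -/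
def walk {Y : Type*} (br : List Bool → Y → Bool) : List Bool → List Y → List Bool
  | _, [] => []
  | p, (v :: vs) => br p v :: walk br (p ++ [br p v]) vs

lemma walk_length {Y : Type*} (br : List Bool → Y → Bool) :
    ∀ (p : List Bool) (l : List Y), (walk br p l).length = l.length := by
  intro p l
  induction l generalizing p with
  | nil => rfl
  | cons v vs ih => simp [walk, ih]

lemma walk_take {Y : Type*} (br : List Bool → Y → Bool) :
    ∀ (t : ℕ) (p : List Bool) (l : List Y),
      walk br p (l.take t) = (walk br p l).take t := by
  intro t
  induction t with
  | zero => intro p l; simp [walk]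
  | succ t ih =>
    intro p l
    cases l with
    | nil => simp [walk]
    | cons v vs => simp [walk, ih]

lemma walk_getElem {Y : Type*} (br : List Bool → Y → Bool) :
    ∀ (l : List Y) (p : List Bool) (i : ℕ) (h1 : i < (walk br p l).length)
      (h2 : i < l.length),
      (walk br p l)[i] = br (p ++ (walk br p l).take i) l[i] := by
  intro l
  induction l with
  | nil => intro p i h1; simp [walk] at h1
  | cons v vs ih =>
    intro p i h1 h2
    cases i with
    | zero => simp [walk]
    | succ i =>
      have h1' : i < (walk br (p ++ [br p v]) vs).length := by
        simpa [walk] using h1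
      have h2' : i < vs.length := by simpa using h2
      simp only [walk, List.getElem_cons_succ, List.take_succ_cons]
      rw [ih (p ++ [br p v]) i h1' h2']
      simp
lemma lsd_mono {V W : Set (X → Y)} (hVW : V ⊆ W) {d : ℕ}
    (h : LShatteredDepth V d) : LShatteredDepth W d := by
  obtain ⟨Tr, e, h1, h2⟩ := h
  refine ⟨Tr, e, h1, fun σ => ?_⟩
  obtain ⟨h', hh', hp⟩ := h2 σ
  exact ⟨h', hVW hh', hp⟩

lemma lsd_zero {V : Set (X → Y)} (hne : V.Nonempty) (x : X) (y : Y) :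
    LShatteredDepth V 0 :=
  ⟨fun _ => x, fun _ _ => y, fun p hp => absurd hp (by simp),
    fun σ => ⟨hne.choose, hne.choose_spec, fun t => t.elim0⟩⟩

/-- Combined tree node function. -/
def combTr (x : X) (T1 T2 : List Bool → X) : List Bool → X
  | [] => x
  | (false :: q) => T1 q
  | (true :: q) => T2 q

/-- Combined edge labels. -/
def combE (y₁ y₂ : Y) (e1 e2 : List Bool → Bool → Y) : List Bool → Bool → Y
  | [] => fun b => if b then y₂ else y₁
  | (false :: q) => e1 q
  | (true :: q) => e2 q

/-- Composition: two distinct-label restrictions both shattered at depth `m`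
give shattering of `V` at depth `m+1`. -/
lemma lsd_succ_of_two {V : Set (X → Y)} {x : X} {y₁ y₂ : Y} {m : ℕ}
    (hne : y₁ ≠ y₂)
    (h1 : LShatteredDepth {h ∈ V | h x = y₁} m)
    (h2 : LShatteredDepth {h ∈ V | h x = y₂} m) :
    LShatteredDepth V (m + 1) := by
  obtain ⟨T1, e1, hd1, hs1⟩ := h1
  obtain ⟨T2, e2, hd2, hs2⟩ := h2
  refine ⟨combTr x T1 T2, combE y₁ y₂ e1 e2, ?_, ?_⟩
  · intro p hp
    cases p with
    | nil => simpa [combE] using hne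
    | cons b q =>
      have hq : q.length < m := by simpa using hp
      cases b
      · simpa [combE] using hd1 q hq
      · simpa [combE] using hd2 q hq
  · intro σ
    have hofn : List.ofFn σ = σ 0 :: List.ofFn (σ ∘ Fin.succ) := by
      rw [List.ofFn_succ]; rfl
    have main : ∀ (b : Bool) (T : List Bool → X) (e : List Bool → Bool → Y) (y : Y),
        σ 0 = b →
        (∀ q, combTr x T1 T2 (b :: q) = T q) →
        (∀ q, combE y₁ y₂ e1 e2 (b :: q) = e q) →
        (combE y₁ y₂ e1 e2 [] b = y) →
        (∀ σ' : Fin m → Bool, ∃ h ∈ {h ∈ V | h x = y}, ∀ t : Fin m,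
          h (T ((List.ofFn σ').take t.1)) = e ((List.ofFn σ').take t.1) (σ' t)) →
        ∃ h ∈ V, ∀ t : Fin (m+1),
          h (combTr x T1 T2 ((List.ofFn σ).take t.1)) =
            combE y₁ y₂ e1 e2 ((List.ofFn σ).take t.1) (σ t) := by
      intro b T e y hb hT hE hy hs
      obtain ⟨h, ⟨hhV, hhx⟩, hp⟩ := hs (σ ∘ Fin.succ)
      refine ⟨h, hhV, fun t => ?_⟩
      refine Fin.cases ?_ (fun j => ?_) t
      · show h (combTr x T1 T2 ((List.ofFn σ).take 0)) = _
        simp only [List.take_zero]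
        show h x = combE y₁ y₂ e1 e2 [] (σ 0)
        rw [hb, hy, hhx]
      · have hcast : (j.succ : Fin (m+1)).1 = j.1 + 1 := rfl
        rw [hcast, hofn, hb, List.take_succ_cons]
        rw [hT, hE]
        have : σ j.succ = (σ ∘ Fin.succ) j := rfl
        rw [this]
        exact hp j
    cases hb : σ 0
    · exact main false T1 e1 y₁ hb (fun q => rfl) (fun q => rfl) rfl hs1
    · exact main true T2 e2 y₂ hb (fun q => rfl) (fun q => rfl) rfl hs2
lemma bl_le_dim {H : Set (X → Y)} {d : ℕ} (h : BLShatteredDepth H d) :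
    (d : ℕ∞) ≤ BLdim H := by
  refine le_trans ?_ (le_iSup₂ (f := fun d (_ : d ∈ {d : ℕ | BLShatteredDepth H d}) => (d : ℕ∞)) d h)
  exact le_refl _

lemma l_le_dim {H : Set (X → Y)} {d : ℕ} (h : LShatteredDepth H d) :
    (d : ℕ∞) ≤ Ldim H := by
  refine le_trans ?_ (le_iSup₂ (f := fun d (_ : d ∈ {d : ℕ | LShatteredDepth H d}) => (d : ℕ∞)) d h)
  exact le_refl _

lemma bl_le_toNat {H : Set (X → Y)} (hBL : BLdim H ≠ ⊤) {d : ℕ}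
    (h : BLShatteredDepth H d) : d ≤ (BLdim H).toNat := by
  have h1 := bl_le_dim h
  rw [← ENat.coe_toNat hBL] at h1
  exact_mod_cast h1

/-- From a multiclass Littlestone tree, build a bandit Littlestone tree. -/
lemma bl_of_l {H : Set (X → Y)} {d : ℕ} (h : LShatteredDepth H d) :
    BLShatteredDepth H d := by
  obtain ⟨Tr, e, hdist, hsh⟩ := h
  classical
  set br : List Bool → Y → Bool := fun p v => if v = e p false then true else false with hbr
  refine ⟨fun l => Tr (walk br [] l), fun y => ?_⟩
  set w : List Bool := walk br [] (List.ofFn y) with hw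
  have hwlen : w.length = d := by rw [hw, walk_length]; simp
  set σ : Fin d → Bool := fun t => w[t.1]'(by omega) with hσdef
  have hσ : List.ofFn σ = w := by
    apply List.ext_getElem (by simp [hwlen])
    intro i h1 h2
    simp [hσdef]
  obtain ⟨h, hhH, hp⟩ := hsh σ
  refine ⟨h, hhH, fun t => ?_⟩
  have htake : walk br [] ((List.ofFn y).take t.1) = (List.ofFn σ).take t.1 := by
    rw [walk_take, hσ]
  have hlen : ((List.ofFn σ).take t.1).length < d := by
    simp only [List.length_take, List.length_ofFn]
    have := t.2; omega
  have hval : σ t = br ((List.ofFn σ).take t.1) (y t) := by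
    have hg := walk_getElem br (List.ofFn y) [] t.1 (by rw [← hw, hwlen]; exact t.2)
      (by simp [t.2])
    show (walk br [] (List.ofFn y))[t.1]'(by rw [walk_length]; simp only [List.length_ofFn]; exact t.2) = _
    rw [hg]
    have hws : walk br [] (List.ofFn y) = List.ofFn σ := (hσ.trans hw).symm
    rw [List.nil_append, hws]
    congr 1
    simp
  show h (Tr (walk br [] ((List.ofFn y).take t.1))) ≠ y t
  rw [htake]
  rw [hp t]
  by_cases hc : y t = e ((List.ofFn σ).take t.1) false
  · have : σ t = true := by rw [hval, hbr]; simp [hc]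
    rw [this, hc]
    exact (hdist _ hlen).symm
  · have : σ t = false := by rw [hval, hbr]; simp [hc]
    rw [this]
    exact fun hh => hc hh.symm
/-- Any finite set of realizable labels at a point has at most `BL+1` elements. -/
lemma proj_finset_card_le {H : Set (X → Y)} (hBL : BLdim H ≠ ⊤) (x : X)
    (s : Finset Y) (hs : ↑s ⊆ proj H x) : s.card ≤ (BLdim H).toNat + 1 := by
  by_contra hlt
  push_neg at hlt
  set d : ℕ := (BLdim H).toNat + 1 with hd
  have hcard : d < s.card := hlt
  have hsh : BLShatteredDepth H d := by
    refine ⟨fun _ => x, fun y => ?_⟩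
    have himg : (Finset.univ.image y).card < s.card :=
      lt_of_le_of_lt (le_trans Finset.card_image_le (by simp)) hcard
    have hnotsub : ¬ (s ⊆ Finset.univ.image y) := fun hsub =>
      absurd (Finset.card_le_card hsub) (by omega)
    obtain ⟨v, hvs, hvn⟩ := Finset.not_subset.mp hnotsub
    obtain ⟨h, hhH, hhx⟩ := hs hvs
    refine ⟨h, hhH, fun t => ?_⟩
    rw [hhx]
    intro hcontra
    exact hvn (Finset.mem_image.mpr ⟨t, Finset.mem_univ t, hcontra.symm⟩)
  have := bl_le_toNat hBL hsh
  omega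
/-- The set of realizable label paths along a `Y`-ary tree `T` of depth `d`. -/
def pathSet (V : Set (X → Y)) (T : List Y → X) (d : ℕ) : Set (Fin d → Y) :=
  {y | ∃ h ∈ V, ∀ t : Fin d, h (T ((List.ofFn y).take t.1)) = y t}

lemma proj_subsingleton_of_not_lsd1 {V : Set (X → Y)}
    (h : ¬ LShatteredDepth V 1) (x : X) :
    ∀ y₁ ∈ proj V x, ∀ y₂ ∈ proj V x, y₁ = y₂ := by
  intro y₁ h₁ y₂ h₂
  by_contra hne
  obtain ⟨f₁, hf₁, hfx₁⟩ := h₁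
  obtain ⟨f₂, hf₂, hfx₂⟩ := h₂
  exact h (lsd_succ_of_two hne
    (lsd_zero ⟨f₁, hf₁, hfx₁⟩ x y₁) (lsd_zero ⟨f₂, hf₂, hfx₂⟩ x y₂))

lemma counting {k : ℕ} (hk : 1 ≤ k) :
    ∀ (d m : ℕ) (V : Set (X → Y)) (T : List Y → X),
      ¬ LShatteredDepth V (m + 1) →
      (∀ x (s : Finset Y), ↑s ⊆ proj V x → s.card ≤ k) →
      (pathSet V T d).Finite ∧ (pathSet V T d).ncard ≤ (k * (d + 1)) ^ m := by
  intro d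
  induction d with
  | zero =>
    intro m V T _ _
    have hsub : (pathSet V T 0).Subsingleton := by
      intro a _ b _
      funext i
      exact i.elim0
    refine ⟨hsub.finite, ?_⟩
    rcases hsub.eq_empty_or_singleton with h | ⟨a, h⟩ <;> rw [h] <;> simp <;>
      exact Nat.one_le_pow _ _ (by omega)
  | succ d ih =>
    intro m V T hns hproj
    classical
    set x₀ : X := T [] with hx₀
    -- the restriction classes and subtrees
    set W : Y → Set (X → Y) := fun y => {h ∈ V | h x₀ = y} with hW
    set T' : Y → List Y → X := fun y l => T (y :: l) with hT'
    have hWsub : ∀ y, W y ⊆ V := fun y h hh => hh.1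
    have hprojW : ∀ (y : Y) (x : X) (s : Finset Y), ↑s ⊆ proj (W y) x → s.card ≤ k := by
      intro y x s hs
      refine hproj x s (fun z hz => ?_)
      obtain ⟨f, hf, hfx⟩ := hs hz
      exact ⟨f, (hWsub y) hf, hfx⟩
    have hnsW : ∀ y, ¬ LShatteredDepth (W y) (m + 1) :=
      fun y h => hns (lsd_mono (hWsub y) h)
    -- finiteness of the projection at the root
    have hfinproj : (proj V x₀).Finite := by
      by_contra hinf
      have hinf' : (proj V x₀).Infinite := hinf
      obtain ⟨s, hs, hcard⟩ := hinf'.exists_subset_card_eq (k + 1)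
      have := hproj x₀ s hs
      omega
    set F : Finset Y := hfinproj.toFinset with hF
    have hFsub : ↑F ⊆ proj V x₀ := by simp [hF]
    have hFcard : F.card ≤ k := hproj x₀ F hFsub
    -- recursive facts
    have hrec : ∀ y, (pathSet (W y) (T' y) d).Finite ∧
        (pathSet (W y) (T' y) d).ncard ≤ (k * (d + 1)) ^ m :=
      fun y => ih m (W y) (T' y) (hnsW y) (hprojW y)
    set Sf : Y → Finset (Fin d → Y) := fun y => (hrec y).1.toFinset with hSf
    have hSfcard : ∀ y, (Sf y).card = (pathSet (W y) (T' y) d).ncard :=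
      fun y => (Set.ncard_eq_toFinset_card _ (hrec y).1).symm
    -- the covering finset
    set G : Finset (Fin (d+1) → Y) :=
      F.biUnion (fun y => (Sf y).image (fun tail => Fin.cons y tail)) with hG
    have hcover : pathSet V T (d+1) ⊆ ↑G := by
      rintro yy ⟨h, hhV, hp⟩
      have h0 : h x₀ = yy 0 := by
        have := hp 0
        simpa using this
      have hofn : List.ofFn yy = yy 0 :: List.ofFn (Fin.tail yy) := by
        rw [List.ofFn_succ]; rfl
      have htail : Fin.tail yy ∈ pathSet (W (yy 0)) (T' (yy 0)) d := by
        refine ⟨h, ⟨hhV, h0⟩, fun t => ?_⟩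
        have := hp t.succ
        have hcast : (t.succ : Fin (d+1)).1 = t.1 + 1 := rfl
        rw [hcast, hofn, List.take_succ_cons] at this
        exact this
      have : yy = Fin.cons (yy 0) (Fin.tail yy) := (Fin.cons_self_tail yy).symm
      rw [Finset.mem_coe, hG, Finset.mem_biUnion]
      refine ⟨yy 0, ?_, ?_⟩
      · simp only [hF, Set.Finite.mem_toFinset]
        exact ⟨h, hhV, h0⟩
      · rw [Finset.mem_image]
        exact ⟨Fin.tail yy, by simp [hSf, htail], this.symm⟩
    have hfin : (pathSet V T (d+1)).Finite := Set.Finite.subset G.finite_toSet hcover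
    refine ⟨hfin, ?_⟩
    have hle1 : (pathSet V T (d+1)).ncard ≤ G.card := by
      have := Set.ncard_le_ncard hcover G.finite_toSet
      rwa [Set.ncard_coe_finset] at this
    have hle2 : G.card ≤ ∑ y ∈ F, (Sf y).card := by
      refine le_trans (Finset.card_biUnion_le) ?_
      exact Finset.sum_le_sum (fun y _ => Finset.card_image_le)
    -- now bound the sum
    have hsum : ∑ y ∈ F, (Sf y).card ≤ (k * (d + 1 + 1)) ^ m := by
      rcases Nat.eq_zero_or_pos m with hm | hm
      · -- m = 0 : at most one realizable label
        subst hm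
        have hF1 : F.card ≤ 1 := by
          refine Finset.card_le_one.mpr (fun a ha b hb => ?_)
          exact proj_subsingleton_of_not_lsd1 (by simpa using hns) x₀
            a (hFsub ha) b (hFsub hb)
        calc ∑ y ∈ F, (Sf y).card ≤ ∑ y ∈ F, 1 := by
              refine Finset.sum_le_sum (fun y _ => ?_)
              rw [hSfcard y]
              simpa using (hrec y).2
          _ = F.card := by simp
          _ ≤ 1 := hF1
          _ ≤ (k * (d + 1 + 1)) ^ 0 := by simp
      · obtain ⟨m', rfl⟩ : ∃ m', m = m' + 1 := ⟨m - 1, by omega⟩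
        have hlight : ∀ y, ¬ LShatteredDepth (W y) (m' + 1) →
            (Sf y).card ≤ (k * (d + 1)) ^ m' := by
          intro y hy
          rw [hSfcard y]
          exact (ih m' (W y) (T' y) hy (hprojW y)).2
        have hheavy : ∀ y, (Sf y).card ≤ (k * (d + 1)) ^ (m' + 1) := by
          intro y
          rw [hSfcard y]
          exact (hrec y).2
        have key : ∑ y ∈ F, (Sf y).card ≤
            (k * (d + 1)) ^ (m' + 1) + k * (k * (d + 1)) ^ m' := by
          by_cases hex : ∃ y₀ ∈ F, LShatteredDepth (W y₀) (m' + 1)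
          · obtain ⟨y₀, hy₀F, hy₀⟩ := hex
            have huniq : ∀ y ∈ F.erase y₀, ¬ LShatteredDepth (W y) (m' + 1) := by
              intro y hy hsh
              have hyne : y ≠ y₀ := (Finset.mem_erase.mp hy).1
              exact hns (lsd_succ_of_two hyne hsh hy₀)
            calc ∑ y ∈ F, (Sf y).card
                = ∑ y ∈ F.erase y₀, (Sf y).card + (Sf y₀).card :=
                  (Finset.sum_erase_add F _ hy₀F).symm
              _ ≤ (F.erase y₀).card * (k * (d + 1)) ^ m' + (k * (d + 1)) ^ (m' + 1) := by
                  gcongr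
                  · refine le_trans (Finset.sum_le_sum
                      (fun y hy => hlight y (huniq y hy))) ?_
                    simp [Finset.sum_const]
                  · exact hheavy y₀
              _ ≤ k * (k * (d + 1)) ^ m' + (k * (d + 1)) ^ (m' + 1) := by
                  gcongr
                  exact le_trans (Finset.card_erase_le) hFcard
              _ = (k * (d + 1)) ^ (m' + 1) + k * (k * (d + 1)) ^ m' := by ring
          · push_neg at hex
            calc ∑ y ∈ F, (Sf y).card
                ≤ ∑ y ∈ F, (k * (d + 1)) ^ m' :=
                  Finset.sum_le_sum (fun y hy => hlight y (hex y hy))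
              _ = F.card * (k * (d + 1)) ^ m' := by simp [Finset.sum_const]
              _ ≤ k * (k * (d + 1)) ^ m' := by gcongr
              _ ≤ (k * (d + 1)) ^ (m' + 1) + k * (k * (d + 1)) ^ m' := le_add_self
        refine le_trans key ?_
        have harith : (k * (d + 1)) ^ (m' + 1) + k * (k * (d + 1)) ^ m'
            = (k * (d + 1)) ^ m' * (k * (d + 1 + 1)) := by ring
        rw [harith, pow_succ]
        gcongr
        omega
    omega
/-- From a shattered Littlestone tree for the loss class, extract `2^d` distinct
realizable label paths on a `Y`-ary tree. -/
lemma paths_of_sg {H : Set (X → Y)} {d : ℕ}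
    (hsh : LShatteredDepth (lossClass H) d) :
    ∃ (T : List Y → X) (f : (Fin d → Bool) → Fin d → Y),
      Function.Injective f ∧ ∀ σ, f σ ∈ pathSet H T d := by
  classical
  obtain ⟨Tr, e, hdist, hs⟩ := hsh
  set br : List Bool → Y → Bool :=
    fun p v => if ((v ≠ (Tr p).2) = e p false) then false else true with hbr
  set T : List Y → X := fun l => (Tr (walk br [] l)).1 with hT
  -- choose a hypothesis for each sign pattern
  have hchoice : ∀ σ : Fin d → Bool, ∃ h ∈ H, ∀ t : Fin d,
      ((h (Tr ((List.ofFn σ).take t.1)).1 ≠ (Tr ((List.ofFn σ).take t.1)).2) : Prop)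
        = e ((List.ofFn σ).take t.1) (σ t) := by
    intro σ
    obtain ⟨f, hfH, hfp⟩ := hs σ
    obtain ⟨h, hhH, rfl⟩ := hfH
    exact ⟨h, hhH, fun t => hfp t⟩
  choose hh hhH hhp using hchoice
  set f : (Fin d → Bool) → Fin d → Y :=
    fun σ t => hh σ ((Tr ((List.ofFn σ).take t.1)).1) with hf
  -- the key: walking the label path recovers the sign pattern
  have key : ∀ σ : Fin d → Bool, walk br [] (List.ofFn (f σ)) = List.ofFn σ := by
    intro σ
    have hlen : (walk br [] (List.ofFn (f σ))).length = d := by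
      rw [walk_length]; simp
    have htake : ∀ i : ℕ, i ≤ d →
        (walk br [] (List.ofFn (f σ))).take i = (List.ofFn σ).take i := by
      intro i
      induction i with
      | zero => intro _; simp
      | succ i ihi =>
        intro hi
        have hi' : i ≤ d := by omega
        have hid : i < d := by omega
        have h1 : (walk br [] (List.ofFn (f σ))).take (i+1)
            = (walk br [] (List.ofFn (f σ))).take i
              ++ [(walk br [] (List.ofFn (f σ)))[i]'(by omega)] := by
          rw [List.take_succ]
          congr 1
          rw [List.getElem?_eq_getElem (by omega)]
          rfl
        have h2 : (List.ofFn σ).take (i+1)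
            = (List.ofFn σ).take i ++ [(List.ofFn σ)[i]'(by simp; omega)] := by
          rw [List.take_succ]
          congr 1
          rw [List.getElem?_eq_getElem (by simp; omega)]
          rfl
        rw [h1, h2, ihi hi']
        congr 1
        have hge := walk_getElem br (List.ofFn (f σ)) [] i (by omega) (by simp; omega)
        rw [List.nil_append, ihi hi'] at hge
        rw [hge]
        have hfi : (List.ofFn (f σ))[i]'(by simp; omega) = f σ ⟨i, hid⟩ := by
          simp
        rw [hfi]
        have hσi : (List.ofFn σ)[i]'(by simp; omega) = σ ⟨i, hid⟩ := by simp
        rw [hσi]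
        -- now compute the branch
        have hp := hhp σ ⟨i, hid⟩
        have hfval : f σ ⟨i, hid⟩ = hh σ ((Tr ((List.ofFn σ).take i)).1) := rfl
        rw [hbr]
        simp only [hfval]
        have hdisti : e ((List.ofFn σ).take i) false ≠ e ((List.ofFn σ).take i) true := by
          refine hdist _ ?_
          simp only [List.length_take, List.length_ofFn]
          omega
        rcases hb : σ ⟨i, hid⟩ with _ | _
        · rw [hb] at hp
          simp only [hp]
          simp
        · rw [hb] at hp
          simp only [hp]
          have hne : ¬ ((e ((List.ofFn σ).take i) true : Prop)
              = e ((List.ofFn σ).take i) false) :=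
            fun hcon => hdisti hcon.symm
          rw [if_neg hne]
    have := htake d (le_refl d)
    rwa [List.take_of_length_le (le_of_eq hlen), List.take_of_length_le (by simp)] at this
  refine ⟨T, f, ?_, ?_⟩
  · intro σ τ hστ
    have h1 : List.ofFn σ = List.ofFn τ := by
      rw [← key σ, ← key τ, hστ]
    have := List.ofFn_injective h1
    exact funext_iff.mpr (fun i => congrFun this i)
  · intro σ
    refine ⟨hh σ, hhH σ, fun t => ?_⟩
    show hh σ ((Tr (walk br [] ((List.ofFn (f σ)).take t.1))).1) = f σ t
    rw [walk_take, key σ]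
lemma numeric_bound {d m N : ℕ} (hm : m ≤ N) (h : 2^d ≤ ((N+1)*(d+1))^m) :
    (d : ℝ) ≤ 20 * m * Real.log ((N : ℝ) + 2) := by
  have hlog2 : (0.6931471803 : ℝ) < Real.log 2 := Real.log_two_gt_d9
  have hlogN : Real.log 2 ≤ Real.log ((N : ℝ) + 2) := by
    apply Real.log_le_log (by norm_num)
    have : (0:ℝ) ≤ (N:ℝ) := Nat.cast_nonneg N
    linarith
  rcases Nat.eq_zero_or_pos m with hm0 | hmpos
  · subst hm0
    have hd : d = 0 := by
      by_contra hd0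
      have := Nat.one_lt_two_pow (n := d) (by omega)
      simp at h
      omega
    subst hd
    simp
  · have hm1 : (1:ℝ) ≤ (m:ℝ) := by exact_mod_cast hmpos
    have hNpos : (0:ℝ) < (N:ℝ) + 1 := by positivity
    have hdpos : (0:ℝ) < (d:ℝ) + 1 := by positivity
    have hmpos' : (0:ℝ) < (m:ℝ) := by linarith
    have hR : ((2:ℝ))^d ≤ (((N:ℝ)+1)*((d:ℝ)+1))^m := by exact_mod_cast h
    have hlog1 : (d:ℝ) * Real.log 2 ≤ (m:ℝ) * Real.log (((N:ℝ)+1)*((d:ℝ)+1)) := by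
      have h' := Real.log_le_log (by positivity) hR
      rwa [Real.log_pow, Real.log_pow] at h'
    have hsplit : Real.log (((N:ℝ)+1)*((d:ℝ)+1))
        = Real.log ((N:ℝ)+1) + Real.log ((d:ℝ)+1) :=
      Real.log_mul (ne_of_gt hNpos) (ne_of_gt hdpos)
    have hN1 : Real.log ((N:ℝ)+1) ≤ Real.log ((N:ℝ)+2) :=
      Real.log_le_log (by positivity) (by linarith)
    have h4m : (0:ℝ) < 4*(m:ℝ) := by linarith
    have hkey : Real.log ((d:ℝ)+1) ≤ ((d:ℝ)+1)/(4*(m:ℝ)) + Real.log (4*(m:ℝ)) := by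
      have hdiv : (0:ℝ) < ((d:ℝ)+1)/(4*(m:ℝ)) := by positivity
      have h' := Real.log_le_sub_one_of_pos hdiv
      rw [Real.log_div (ne_of_gt hdpos) (ne_of_gt h4m)] at h'
      linarith
    have hlog4 : Real.log (4:ℝ) = 2 * Real.log 2 := by
      rw [show (4:ℝ) = 2^2 by norm_num, Real.log_pow]
      norm_num
    have hlogm : Real.log (m:ℝ) ≤ Real.log ((N:ℝ)+2) := by
      apply Real.log_le_log hmpos'
      have : (m:ℝ) ≤ (N:ℝ) := by exact_mod_cast hm
      linarith
    have h4msplit : Real.log (4*(m:ℝ)) = Real.log 4 + Real.log (m:ℝ) :=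
      Real.log_mul (by norm_num) (ne_of_gt hmpos')
    have e1 : (m:ℝ) * (((d:ℝ)+1)/(4*(m:ℝ))) = ((d:ℝ)+1)/4 := by
      field_simp
    have hlog4m : Real.log (4*(m:ℝ)) ≤ 3 * Real.log ((N:ℝ)+2) := by
      rw [h4msplit, hlog4]
      linarith
    have hmain : (d:ℝ) * Real.log 2 ≤ 4*(m:ℝ)*Real.log ((N:ℝ)+2) + ((d:ℝ)+1)/4 := by
      have t1 := mul_le_mul_of_nonneg_left hkey (le_of_lt hmpos')
      rw [mul_add, e1] at t1
      have t2 := mul_le_mul_of_nonneg_left hlog4m (le_of_lt hmpos')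
      have s1 : (m:ℝ) * Real.log ((d:ℝ)+1)
          ≤ ((d:ℝ)+1)/4 + (m:ℝ) * (3 * Real.log ((N:ℝ)+2)) := by linarith
      have s2 : (m:ℝ) * Real.log ((N:ℝ)+1) ≤ (m:ℝ) * Real.log ((N:ℝ)+2) :=
        mul_le_mul_of_nonneg_left hN1 (le_of_lt hmpos')
      rw [hsplit, mul_add] at hlog1
      linarith
    have hquarter : (1:ℝ)/4 ≤ (m:ℝ) * Real.log ((N:ℝ)+2) := by
      nlinarith
    have hdlog : (d:ℝ) * (1/2) ≤ (d:ℝ) * Real.log 2 := by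
      have hd0 : (0:ℝ) ≤ (d:ℝ) := Nat.cast_nonneg d
      nlinarith
    nlinarith [hmain, hquarter, hdlog]
lemma stmt4_aux :
    ∀ (X : Type u) (Y : Type v) (H : Set (X → Y)), BLdim H ≠ ⊤ →
      SGdim H ≠ ⊤ ∧
      ((SGdim H).toNat : ℝ) ≤
        20 * ((Ldim H).toNat : ℝ) * Real.log (((BLdim H).toNat : ℝ) + 2) := by
  intro X Y H hBL
  set N : ℕ := (BLdim H).toNat with hN
  have hLsh : ∀ d, LShatteredDepth H d → d ≤ N :=
    fun d hd => bl_le_toNat hBL (bl_of_l hd)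
  have hle : Ldim H ≤ (N : ℕ∞) := by
    refine iSup₂_le ?_
    intro d hd
    exact_mod_cast Nat.cast_le.mpr (hLsh d hd)
  have hLne : Ldim H ≠ ⊤ := ne_top_of_le_ne_top (ENat.coe_ne_top N) hle
  set m : ℕ := (Ldim H).toNat with hm
  have hmN : m ≤ N := by
    rw [← ENat.coe_toNat hLne] at hle
    exact_mod_cast hle
  have hnotsh : ¬ LShatteredDepth H (m + 1) := by
    intro hsh
    have h1 := l_le_dim hsh
    rw [← ENat.coe_toNat hLne] at h1
    have : m + 1 ≤ m := by exact_mod_cast h1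
    omega
  have hbound : ∀ d, LShatteredDepth (lossClass H) d →
      (d : ℝ) ≤ 20 * (m : ℝ) * Real.log ((N : ℝ) + 2) := by
    intro d hd
    obtain ⟨T, f, hinj, hmem⟩ := paths_of_sg hd
    have hcount := counting (k := N + 1) (by omega) d m H T hnotsh
      (fun x s hs => proj_finset_card_le hBL x s hs)
    have h2d : 2 ^ d ≤ ((N + 1) * (d + 1)) ^ m := by
      have hcard : 2 ^ d ≤ (pathSet H T d).ncard := by
        have hcc : Fintype.card (Fin d → Bool) ≤ hcount.1.toFinset.card := by
          apply Finset.card_le_card_of_injOn f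
          · intro σ _
            simp only [Finset.mem_coe, Set.Finite.mem_toFinset]
            exact hmem σ
          · exact Set.injOn_of_injective hinj
        rw [Set.ncard_eq_toFinset_card _ hcount.1]
        calc 2 ^ d = Fintype.card (Fin d → Bool) := by
              rw [Fintype.card_fun]
              simp
          _ ≤ _ := hcc
      exact le_trans hcard hcount.2
    exact numeric_bound hmN h2d
  set R : ℝ := 20 * (m : ℝ) * Real.log ((N : ℝ) + 2) with hR
  have hR0 : 0 ≤ R := by
    have hlog : 0 ≤ Real.log ((N : ℝ) + 2) := by
      apply Real.log_nonneg
      have : (0:ℝ) ≤ (N:ℝ) := Nat.cast_nonneg N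
      linarith
    positivity
  have hsg : SGdim H ≤ (⌊R⌋₊ : ℕ∞) := by
    refine iSup₂_le ?_
    intro d hd
    exact_mod_cast Nat.cast_le.mpr (Nat.le_floor (hbound d hd))
  have hsgne : SGdim H ≠ ⊤ := ne_top_of_le_ne_top (ENat.coe_ne_top _) hsg
  refine ⟨hsgne, ?_⟩
  have h1 : (SGdim H).toNat ≤ ⌊R⌋₊ := by
    rw [← ENat.coe_toNat hsgne] at hsg
    exact_mod_cast hsg
  calc ((SGdim H).toNat : ℝ) ≤ (⌊R⌋₊ : ℝ) := by exact_mod_cast h1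
    _ ≤ R := Nat.floor_le hR0

/-- If `BL(H) < ∞` then `SG(H) = O(L(H) · log BL(H))` (with a universal constant);
in particular finiteness of `BL(H)` implies finiteness of `SG(H)`. -/
theorem stmt4 : ∃ c : ℝ, 0 < c ∧
    ∀ (X : Type u) (Y : Type v) (H : Set (X → Y)), BLdim H ≠ ⊤ →
      SGdim H ≠ ⊤ ∧
      ((SGdim H).toNat : ℝ) ≤
        c * ((Ldim H).toNat : ℝ) * Real.log (((BLdim H).toNat : ℝ) + 2) := by
  exact ⟨20, by norm_num, stmt4_aux⟩
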